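/- arXiv:1908.11478 — 4 statements merged into one kernel-verified Lean document; each statement's English description precedes it below -/
import Mathlib

section
/- For every integer k ≥ 3, if a finite connected graph G contains no induced subgraph isomorphic to the disjoint union of an edge and a path on k vertices (P_2 + P_k), then the cop number of G is at most k. -/
open SimpleGraph

/-- The sequence of positions in a play of the Cops and Robber game:
`(copsRobberSeq init F rob r₀ t).1` are the cop positions and `.2` the robber
position after round `t`. In each round the cops move first, then the robber. -/
def copsRobberSeq {V : Type*} {n : ℕ} (init : Fin n → V)
    (F : (Fin n → V) → V → (Fin n → V)) (rob : (Fin n → V) → V → V) (r₀ : V) :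
    ℕ → (Fin n → V) × V
  | 0 => (init, r₀)
  | t + 1 =>
      let p := copsRobberSeq init F rob r₀ t
      let c' := F p.1 p.2
      (c', rob c' p.2)

/-- `CopWinWith G n` means that `n` cops have a strategy on the graph `G`
(choice of initial positions and a move function, each move staying put or
going to an adjacent vertex) that captures the robber against every robber
strategy: at some round, some cop occupies the robber's current vertex. -/
def CopWinWith {V : Type*} (G : SimpleGraph V) (n : ℕ) : Prop :=
  ∃ (init : Fin n → V) (F : (Fin n → V) → V → (Fin n → V)),
    (∀ c r i, F c r i = c i ∨ G.Adj (c i) (F c r i)) ∧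
    ∀ (r₀ : V) (rob : (Fin n → V) → V → V),
      (∀ c r, rob c r = r ∨ G.Adj r (rob c r)) →
      ∃ t, (∃ i, (copsRobberSeq init F rob r₀ t).1 i = (copsRobberSeq init F rob r₀ t).2) ∨
           (∃ i, (copsRobberSeq init F rob r₀ (t + 1)).1 i = (copsRobberSeq init F rob r₀ t).2)

/-- The cop number of `G`: the least `n` such that `n` cops can guarantee capture. -/
noncomputable def copNumber {V : Type*} (G : SimpleGraph V) : ℕ :=
  sInf {n | CopWinWith G n}

namespace CRGame

attribute [local instance] Classical.propDecidable

variable {V : Type*} (G : SimpleGraph V) {n : ℕ}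

/-- closed neighborhood membership -/
def Ncl (a v : V) : Prop := a = v ∨ G.Adj a v

def CopMove (c c' : Fin n → V) : Prop := ∀ i, c' i = c i ∨ G.Adj (c i) (c' i)

def RobMove (r r' : V) : Prop := r' = r ∨ G.Adj r r'

def WinN : ℕ → (Fin n → V) → V → Prop
  | 0 => fun c r => ∃ i, c i = r
  | (m+1) => fun c r => WinN m c r ∨
      ∃ c', CopMove G c c' ∧ ((∃ i, c' i = r) ∨ ∀ r', RobMove G r r' → WinN m c' r')

def EWin (c : Fin n → V) (r : V) : Prop := ∃ m, WinN G m c r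

lemma winN_succ_of (m : ℕ) : ∀ (c : Fin n → V) (r : V), WinN G m c r → WinN G (m+1) c r := by
  induction m with
  | zero => intro c r h; exact Or.inl h
  | succ m ih =>
    intro c r h
    rcases h with h | ⟨c', hmove, hcap⟩
    · exact Or.inl (ih c r h)
    · refine Or.inr ⟨c', hmove, ?_⟩
      rcases hcap with h | h
      · exact Or.inl h
      · exact Or.inr fun r' hr' => ih c' r' (h r' hr')

lemma winN_mono {m m' : ℕ} (h : m ≤ m') {c : Fin n → V} {r : V} (hw : WinN G m c r) :
    WinN G m' c r := by
  induction h with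
  | refl => exact hw
  | step _ ih => exact winN_succ_of G _ _ _ ih

lemma ewin_catch {c : Fin n → V} {r : V} (h : ∃ i, c i = r) : EWin G c r := ⟨0, h⟩

lemma ewin_step [Fintype V] {c : Fin n → V} {r : V} (c' : Fin n → V) (hmove : CopMove G c c')
    (h : (∃ i, c' i = r) ∨ ∀ r', RobMove G r r' → EWin G c' r') : EWin G c r := by
  classical
  rcases h with h | h
  · exact ⟨1, Or.inr ⟨c', hmove, Or.inl h⟩⟩
  · set f : V → ℕ := fun r' => if hh : EWin G c' r' then Nat.find hh else 0 with hf
    set M : ℕ := Finset.univ.sup f with hM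
    refine ⟨M + 1, Or.inr ⟨c', hmove, Or.inr fun r' hr' => ?_⟩⟩
    have he : EWin G c' r' := h r' hr'
    have h1 : WinN G (Nat.find he) c' r' := Nat.find_spec he
    have h2 : f r' = Nat.find he := by simp [hf, he]
    have h3 : f r' ≤ M := Finset.le_sup (Finset.mem_univ r')
    exact winN_mono G (by omega) h1
  
lemma ewin_cov [Fintype V] {c : Fin n → V} {r : V} (i : Fin n) (h : Ncl G (c i) r) :
    EWin G c r := by
  classical
  rcases h with h | h
  · exact ewin_catch G ⟨i, h⟩
  · refine ewin_step G (Function.update c i r) (fun l => ?_) (Or.inl ⟨i, Function.update_self i r c⟩)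
    by_cases hl : l = i
    · subst hl; right; rw [Function.update_self]; exact h
    · left; rw [Function.update_of_ne hl]

/-- extraction of a memoryless strategy from the attractor -/
lemma step_of_ewin {c : Fin n → V} {r : V} (h : EWin G c r) (hnc : ¬ ∃ i, c i = r) :
    ∃ c', CopMove G c c' ∧
      ((∃ i, c' i = r) ∨ ∀ r', RobMove G r r' → WinN G (Nat.find h - 1) c' r') := by
  classical
  have hspec : WinN G (Nat.find h) c r := Nat.find_spec h
  have hpos : Nat.find h ≠ 0 := by
    intro h0
    rw [h0] at hspec
    exact hnc hspec
  obtain ⟨m, hm⟩ : ∃ m, Nat.find h = m + 1 := ⟨Nat.find h - 1, by omega⟩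
  rw [hm] at hspec
  rcases hspec with hlt | ⟨c', hmove, hcap⟩
  · exact absurd hlt (Nat.find_min h (by omega))
  · exact ⟨c', hmove, by rwa [hm, Nat.add_sub_cancel]⟩

noncomputable def copF (c : Fin n → V) (r : V) : Fin n → V := by
  classical
  exact if h : (EWin G c r) ∧ ¬ ∃ i, c i = r
    then Classical.choose (step_of_ewin G h.1 h.2) else c

lemma copF_valid (c : Fin n → V) (r : V) : ∀ i, copF G c r i = c i ∨ G.Adj (c i) (copF G c r i) := by
  classical
  intro i
  unfold copF
  split
  · next h => exact (Classical.choose_spec (step_of_ewin G h.1 h.2)).1 i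
  · simp

theorem ewin_copWinWith [Fintype V] (init : Fin n → V) (h : ∀ r₀, EWin G init r₀) :
    CopWinWith G n := by
  classical
  refine ⟨init, copF G, copF_valid G, ?_⟩
  intro r₀ rob hrob
  -- capture by rank induction
  suffices H : ∀ (N t : ℕ), (he : EWin G (copsRobberSeq init (copF G) rob r₀ t).1
        (copsRobberSeq init (copF G) rob r₀ t).2) → Nat.find he ≤ N →
      ∃ t', (∃ i, (copsRobberSeq init (copF G) rob r₀ t').1 i =
            (copsRobberSeq init (copF G) rob r₀ t').2) ∨
           (∃ i, (copsRobberSeq init (copF G) rob r₀ (t' + 1)).1 i =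
            (copsRobberSeq init (copF G) rob r₀ t').2) by
    have he : EWin G (copsRobberSeq init (copF G) rob r₀ 0).1
        (copsRobberSeq init (copF G) rob r₀ 0).2 := h r₀
    exact H (Nat.find he) 0 he le_rfl
  intro N
  induction N with
  | zero =>
    intro t he hle
    have h0 : Nat.find he = 0 := by omega
    have := Nat.find_spec he
    rw [h0] at this
    exact ⟨t, Or.inl this⟩
  | succ N ih =>
    intro t he hle
    set s := copsRobberSeq init (copF G) rob r₀ t with hs
    by_cases hnc : ∃ i, s.1 i = s.2
    · exact ⟨t, Or.inl hnc⟩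
    · have hcond : (EWin G s.1 s.2) ∧ ¬ ∃ i, s.1 i = s.2 := ⟨he, hnc⟩
      have hF : copF G s.1 s.2 = Classical.choose (step_of_ewin G hcond.1 hcond.2) := by
        unfold copF
        rw [dif_pos hcond]
      have hspec := Classical.choose_spec (step_of_ewin G hcond.1 hcond.2)
      set c' := Classical.choose (step_of_ewin G hcond.1 hcond.2) with hc'
      have hseq1 : copsRobberSeq init (copF G) rob r₀ (t+1) = (copF G s.1 s.2, rob (copF G s.1 s.2) s.2) := by
        rw [copsRobberSeq]
      rcases hspec.2 with hcap | hall
      · refine ⟨t, Or.inr ?_⟩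
        rw [hseq1, hF]
        exact hcap
      · -- robber moves
        have hrm : RobMove G s.2 (rob c' s.2) := by
          rcases hrob c' s.2 with h1 | h1
          · exact Or.inl h1
          · exact Or.inr h1
        have hw : WinN G (Nat.find hcond.1 - 1) c' (rob c' s.2) := hall _ hrm
        have he' : EWin G (copsRobberSeq init (copF G) rob r₀ (t+1)).1
            (copsRobberSeq init (copF G) rob r₀ (t+1)).2 := by
          rw [hseq1, hF]
          exact ⟨_, hw⟩
        have hfind : Nat.find he' ≤ N := by
          have h1 : Nat.find he' ≤ Nat.find hcond.1 - 1 := by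
            apply Nat.find_le
            rw [hseq1, hF]
            exact hw
          have h2 : Nat.find hcond.1 ≠ 0 := by
            intro h0
            have := Nat.find_spec hcond.1
            rw [h0] at this
            exact hnc this
          have h3 : Nat.find hcond.1 ≤ N + 1 := hle
          omega
        exact ih (t+1) he' hfind

end CRGame
-- Part 2: component theory (appended to part1 for testing)
namespace CRGame

variable {V : Type*} (G : SimpleGraph V)

def stayRel (A : Set V) : V → V → Prop := fun u v => G.Adj u v ∧ u ∈ A ∧ v ∈ A

def Stay (A : Set V) (r : V) : Set V := {v | Relation.ReflTransGen (stayRel G A) r v}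

lemma stay_refl (A : Set V) (r : V) : r ∈ Stay G A r := Relation.ReflTransGen.refl

lemma stay_mem {A : Set V} {r v : V} (hr : r ∈ A) (hv : v ∈ Stay G A r) : v ∈ A := by
  induction hv with
  | refl => exact hr
  | tail _ h _ => exact h.2.2

lemma stay_tail {A : Set V} {r v w : V} (hr : r ∈ A) (hv : v ∈ Stay G A r)
    (hadj : G.Adj v w) (hw : w ∈ A) : w ∈ Stay G A r :=
  Relation.ReflTransGen.tail hv ⟨hadj, stay_mem G hr hv, hw⟩

lemma stay_symmRel (A : Set V) : Symmetric (stayRel G A) :=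
  fun _ _ h => ⟨h.1.symm, h.2.2, h.2.1⟩

lemma stay_trans {A : Set V} {r v w : V} (hv : v ∈ Stay G A r) (hw : w ∈ Stay G A v) :
    w ∈ Stay G A r := Relation.ReflTransGen.trans hv hw

lemma stay_symm {A : Set V} {r v : V} (hv : v ∈ Stay G A r) : r ∈ Stay G A v :=
  by
  show Relation.ReflTransGen (stayRel G A) v r
  have hv' : Relation.ReflTransGen (stayRel G A) r v := hv
  clear hv
  induction hv' with
  | refl => exact Relation.ReflTransGen.refl
  | tail _ h ih => exact Relation.ReflTransGen.head (stay_symmRel G A h) ih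

lemma stay_rebase {A : Set V} {r v : V} (hv : v ∈ Stay G A r) :
    Stay G A v = Stay G A r := by
  ext w
  constructor
  · intro hw; exact stay_trans G hv hw
  · intro hw; exact stay_trans G (stay_symm G hv) hw

lemma stay_mono {A A' : Set V} (h : A' ⊆ A) (r : V) : Stay G A' r ⊆ Stay G A r := by
  intro v hv
  have hv' : Relation.ReflTransGen (stayRel G A') r v := hv
  clear hv
  show Relation.ReflTransGen (stayRel G A) r v
  induction hv' with
  | refl => exact Relation.ReflTransGen.refl
  | tail _ hab ih => exact Relation.ReflTransGen.tail ih ⟨hab.1, h hab.2.1, h hab.2.2⟩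

/-- Boundary ("gate") lemma: if the component of `r` in `A` touches the closed
neighborhood of `g`, but `r` itself is not in it, then there is a vertex `z`
adjacent to `g`, inside `A`, outside the new component of `r` in `A ∖ N[g]`, and
adjacent to that new component. -/
lemma bnd {A : Set V} {g r w : V} (hrA : r ∈ A) (hrg : ¬ Ncl G g r)
    (hw : w ∈ Stay G A r) (hwg : Ncl G g w) :
    ∃ z, G.Adj g z ∧ z ∈ A ∧ z ∉ Stay G (A ∩ {v | ¬ Ncl G g v}) r ∧
      ∃ cc ∈ Stay G (A ∩ {v | ¬ Ncl G g v}) r, G.Adj z cc := by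
  set A' : Set V := A ∩ {v | ¬ Ncl G g v} with hA'
  have hrA' : r ∈ A' := ⟨hrA, hrg⟩
  have claim : ∀ w' ∈ Stay G A r, w' ∈ Stay G A' r ∨
      (∃ z, G.Adj g z ∧ z ∈ A ∧ z ∉ Stay G A' r ∧ ∃ cc ∈ Stay G A' r, G.Adj z cc) := by
    intro w' hw'
    induction hw' with
    | refl => exact Or.inl (stay_refl G A' r)
    | tail hprev hrel ih =>
      rename_i v w''
      rcases ih with hv | hz
      · by_cases hNg : Ncl G g w''
        · rcases hNg with hEq | hAdj
          · -- w'' = g : impossible since v ∈ A' is not in N[g] but v ~ g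
            exfalso
            have hvA' : v ∈ A' := stay_mem G hrA' hv
            exact hvA'.2 (Or.inr (hEq ▸ hrel.1.symm))
          · refine Or.inr ⟨w'', hAdj, hrel.2.2, ?_, v, hv, hrel.1.symm⟩
            intro hmem
            exact (stay_mem G hrA' hmem).2 (Or.inr hAdj)
        · exact Or.inl (stay_tail G hrA' hv hrel.1 ⟨hrel.2.2, hNg⟩)
      · exact Or.inr hz
  rcases claim w hw with hmem | hz
  · exfalso
    exact (stay_mem G hrA' hmem).2 hwg
  · exact hz

end CRGame
-- Part 3: walk lemma and forbidden configuration
namespace CRGame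

variable {V : Type*} (G : SimpleGraph V)

/-- A free cop can walk to its destination while the robber stays confined. -/
lemma walk_win [Fintype V] {n : ℕ} (C : Set V) (i : Fin n) {a u : V} (p : G.Walk a u) :
    ∀ (c : Fin n → V), c i = a →
    (∀ r' ∈ C, EWin G (Function.update c i u) r') →
    (∀ r' ∈ C, ∀ w, RobMove G r' w → w ∈ C ∨ ∃ l, l ≠ i ∧ Ncl G (c l) w) →
    ∀ r' ∈ C, EWin G c r' := by
  induction p with
  | nil =>
    rename_i vu
    intro c hci Hsafe Hstep r' hr'
    have h : Function.update c i vu = c := by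
      rw [← hci]; exact Function.update_eq_self i c
    rw [h] at Hsafe
    exact Hsafe r' hr'
  | cons hadj p ih =>
    rename_i va vb vc
    intro c hci Hsafe Hstep r' hr'
    set c' := Function.update c i vb with hc'
    have hmove : CopMove G c c' := by
      intro l
      by_cases hl : l = i
      · subst hl
        right
        rw [hc', Function.update_self, hci]
        exact hadj
      · left
        rw [hc', Function.update_of_ne hl]
    refine ewin_step G c' hmove (Or.inr fun w hw => ?_)
    rcases Hstep r' hr' w hw with hwC | ⟨l, hl, hNcl⟩
    · refine ih c' (by rw [hc', Function.update_self]) ?_ ?_ w hwC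
      · intro r'' hr''
        have h2 : Function.update c' i vc = Function.update c i vc := by
          rw [hc', Function.update_idem]
        rw [h2]
        exact Hsafe r'' hr''
      · intro r'' hr'' w' hw'
        rcases Hstep r'' hr'' w' hw' with h1 | ⟨l, hl, hNcl⟩
        · exact Or.inl h1
        · refine Or.inr ⟨l, hl, ?_⟩
          rwa [hc', Function.update_of_ne hl]
    · refine ewin_cov G l ?_
      rwa [show c' l = c l from by rw [hc', Function.update_of_ne hl]]

open SimpleGraph in
/-- An edge `(x,y)` together with an induced `k`-path, mutually nonadjacent,
gives an induced `P₂ + P_k`, contradicting freeness. -/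
lemma forbidden {k : ℕ}
    (hfree : IsEmpty ((pathGraph 2 ⊕g pathGraph k) ↪g G))
    (x y : V) (hxy : G.Adj x y) (P : Fin k → V)
    (hchain : ∀ i j : Fin k, i.val + 1 = j.val → G.Adj (P i) (P j))
    (hsep : ∀ i j : Fin k, i.val + 2 ≤ j.val → ¬ Ncl G (P i) (P j))
    (hxP : ∀ i, ¬ Ncl G x (P i)) (hyP : ∀ i, ¬ Ncl G y (P i)) : False := by
  have hxyne : x ≠ y := hxy.ne
  have hPadj : ∀ i j : Fin k, G.Adj (P i) (P j) ↔ (i.val + 1 = j.val ∨ j.val + 1 = i.val) := by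
    intro i j
    constructor
    · intro hadj
      rcases lt_trichotomy i.val j.val with h | h | h
      · rcases Nat.lt_iff_add_one_le.mp h |>.lt_or_eq with h1 | h1
        · exact absurd (Or.inr hadj) (hsep i j (by omega))
        · exact Or.inl h1
      · exfalso
        rw [show i = j from Fin.ext h] at hadj
        exact G.irrefl hadj
      · rcases Nat.lt_iff_add_one_le.mp h |>.lt_or_eq with h1 | h1
        · exact absurd (Or.inr hadj.symm) (hsep j i (by omega))
        · exact Or.inr h1
    · intro h
      rcases h with h | h
      · exact hchain i j h
      · exact (hchain j i h).symm
  have hPinj : Function.Injective P := by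
    intro i j hij
    by_contra hne
    have hne' : i.val ≠ j.val := fun h => hne (Fin.ext h)
    rcases lt_trichotomy i.val j.val with h | h | h
    · rcases Nat.lt_iff_add_one_le.mp h |>.lt_or_eq with h1 | h1
      · exact hsep i j (by omega) (Or.inl hij)
      · have h2 := hchain i j h1
        rw [hij] at h2
        exact G.irrefl h2
    · exact hne' h
    · rcases Nat.lt_iff_add_one_le.mp h |>.lt_or_eq with h1 | h1
      · exact hsep j i (by omega) (Or.inl hij.symm)
      · have h2 := hchain j i h1
        rw [hij] at h2
        exact G.irrefl h2
  set f : (Fin 2) ⊕ (Fin k) → V := Sum.elim ![x, y] P with hf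
  have hfl : ∀ a : Fin 2, f (Sum.inl a) = ![x, y] a := fun a => rfl
  have hfr : ∀ b : Fin k, f (Sum.inr b) = P b := fun b => rfl
  have hinj : Function.Injective f := by
    intro a b hab
    match a, b with
    | Sum.inl a, Sum.inl b =>
      rw [hfl, hfl] at hab
      fin_cases a <;> fin_cases b <;> simp_all
    | Sum.inl a, Sum.inr b =>
      exfalso
      rw [hfl, hfr] at hab
      fin_cases a
      · exact hxP b (Or.inl (by simpa using hab))
      · exact hyP b (Or.inl (by simpa using hab))
    | Sum.inr a, Sum.inl b =>
      exfalso
      rw [hfl, hfr] at hab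
      fin_cases b
      · exact hxP a (Or.inl (by simp at hab; exact hab.symm))
      · exact hyP a (Or.inl (by simp at hab; exact hab.symm))
    | Sum.inr a, Sum.inr b =>
      rw [hfr, hfr] at hab
      exact congrArg Sum.inr (hPinj hab)
  refine hfree.elim ⟨⟨f, hinj⟩, ?_⟩
  intro a b
  simp only [Function.Embedding.coeFn_mk]
  match a, b with
  | Sum.inl a, Sum.inl b =>
    rw [hfl, hfl]
    fin_cases a <;> fin_cases b <;>
      simp [SimpleGraph.sum_adj, pathGraph_adj, hxy, hxy.symm, G.irrefl]
  | Sum.inl a, Sum.inr b =>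
    rw [hfl, hfr]
    fin_cases a <;> simp [SimpleGraph.sum_adj]
    · exact fun h => hxP b (Or.inr h)
    · exact fun h => hyP b (Or.inr h)
  | Sum.inr a, Sum.inl b =>
    rw [hfr, hfl]
    fin_cases b <;> simp [SimpleGraph.sum_adj]
    · exact fun h => hxP a (Or.inr h.symm)
    · exact fun h => hyP a (Or.inr h.symm)
  | Sum.inr a, Sum.inr b =>
    rw [hfr, hfr, hPadj a b]
    simp [SimpleGraph.sum_adj, pathGraph_adj]

end CRGame
-- Part 4: main induction
namespace CRGame

variable {V : Type*} [Fintype V] {k : ℕ} (G : SimpleGraph V)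

def A0 (x y : V) : Set V := {v | ¬ Ncl G x v ∧ ¬ Ncl G y v}

def AJ (x y : V) (p : ℕ → V) (j : ℕ) : Set V :=
  {v | v ∈ A0 G x y ∧ ∀ t, t < j → ¬ Ncl G (p t) v}

omit [Fintype V] in
lemma AJ_eq_of_agree (x y : V) {p p' : ℕ → V} {j : ℕ} (h : ∀ t, t < j → p t = p' t) :
    AJ G x y p j = AJ G x y p' j := by
  ext v
  simp only [AJ, Set.mem_setOf_eq]
  constructor
  · rintro ⟨h0, h1⟩; exact ⟨h0, fun t ht => (h t ht) ▸ h1 t ht⟩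
  · rintro ⟨h0, h1⟩; exact ⟨h0, fun t ht => (h t ht).symm ▸ h1 t ht⟩

omit [Fintype V] in
lemma AJ_succ (x y : V) (p : ℕ → V) (j : ℕ) :
    AJ G x y p (j+1) = AJ G x y p j ∩ {v | ¬ Ncl G (p j) v} := by
  ext v
  simp only [AJ, Set.mem_setOf_eq, Set.mem_inter_iff]
  constructor
  · rintro ⟨h0, h1⟩
    exact ⟨⟨h0, fun t ht => h1 t (by omega)⟩, h1 j (by omega)⟩
  · rintro ⟨⟨h0, h1⟩, h2⟩
    refine ⟨h0, fun t ht => ?_⟩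
    rcases Nat.lt_succ_iff_lt_or_eq.mp ht with h | h
    · exact h1 t h
    · subst h; exact h2

lemma main_ind (hk : 3 ≤ k) (hconn : G.Connected)
    (hfree : IsEmpty ((SimpleGraph.pathGraph 2 ⊕g SimpleGraph.pathGraph k) ↪g G))
    (x y : V) (hxy : G.Adj x y) :
    ∀ (N : ℕ), ∀ (j : ℕ) (p : ℕ → V) (r : V) (c : Fin k → V)
    (hjk : j + 2 ≤ k)
    (hN : (Stay G (AJ G x y p j) r).ncard ≤ N)
    (h0 : c ⟨0, by omega⟩ = x)
    (h1 : c ⟨1, by omega⟩ = y)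
    (hpark : ∀ t (ht : t < j), c ⟨t+2, by omega⟩ = p t)
    (hpA : ∀ t, t < j → p t ∈ A0 G x y)
    (hchain : ∀ t, t + 1 < j → G.Adj (p t) (p (t+1)))
    (hsep : ∀ t s, t + 2 ≤ s → s < j → ¬ Ncl G (p t) (p s))
    (hr : r ∈ AJ G x y p j)
    (hinv1 : 0 < j → G.Adj (p (j-1)) (p j))
    (hinv2 : p j ∈ AJ G x y p (j-1))
    (hinv3 : 0 < j → p j ∉ Stay G (AJ G x y p j) r)
    (hinv4 : 0 < j → ∃ cc ∈ Stay G (AJ G x y p j) r, G.Adj (p j) cc),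
    EWin G c r := by
  intro N
  induction N with
  | zero =>
    intro j p r c hjk hN h0 h1 hpark hpA hchain hsep hr hinv1 hinv2 hinv3 hinv4
    exfalso
    have hrC : r ∈ Stay G (AJ G x y p j) r := stay_refl G _ r
    have hfin : (Stay G (AJ G x y p j) r).Finite := Set.toFinite _
    have hz : (Stay G (AJ G x y p j) r).ncard = 0 := by omega
    rw [Set.ncard_eq_zero hfin] at hz
    rw [hz] at hrC
    exact hrC
  | succ N IH =>
    intro j p r c hjk hN h0 h1 hpark hpA hchain hsep hr hinv1 hinv2 hinv3 hinv4
    by_cases hjeq : j + 2 = k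
    · -- all cops parked: contradiction with freeness
      exfalso
      have hjpos : 0 < j := by omega
      obtain ⟨cc, hccC, hcc⟩ := hinv4 hjpos
      have hccAJ : cc ∈ AJ G x y p j := stay_mem G hr hccC
      have hgtAJ : p j ∈ AJ G x y p (j-1) := hinv2
      set P : Fin k → V := fun i => if i.val ≤ j then p i.val else cc with hP
      refine forbidden G hfree x y hxy P ?_ ?_ ?_ ?_
      · -- chain
        intro i i' hii'
        have hi' : i'.val < k := i'.isLt
        by_cases hc1 : i'.val ≤ j
        · have hi : i.val ≤ j := by omega
          simp only [hP, if_pos hc1, if_pos hi]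
          by_cases hc2 : i'.val = j
          · have hji : i.val = j - 1 := by omega
            rw [hji, hc2]
            exact hinv1 hjpos
          · have h3 : i'.val = i.val + 1 := hii'.symm
            rw [h3]
            exact hchain i.val (by omega)
        · -- i'.val = j+1, P i' = cc, i.val = j
          have hij : i.val = j := by omega
          simp only [hP, if_neg hc1, if_pos (show i.val ≤ j by omega), hij]
          exact hcc
      · -- separation
        intro i i' hii'
        have hi' : i'.val < k := i'.isLt
        by_cases hc1 : i'.val ≤ j
        · have hi : i.val ≤ j := by omega
          simp only [hP, if_pos hc1, if_pos hi]
          by_cases hc2 : i'.val = j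
          · rw [hc2]
            exact hgtAJ.2 i.val (by omega)
          · exact hsep i.val i'.val hii' (by omega)
        · -- P i' = cc
          simp only [hP, if_neg hc1, if_pos (show i.val ≤ j by omega)]
          exact hccAJ.2 i.val (by omega)
      · -- x
        intro i
        by_cases hc1 : i.val ≤ j
        · simp only [hP, if_pos hc1]
          by_cases hc2 : i.val = j
          · rw [hc2]; exact hgtAJ.1.1
          · exact (hpA i.val (by omega)).1
        · simp only [hP, if_neg hc1]
          exact hccAJ.1.1
      · -- y
        intro i
        by_cases hc1 : i.val ≤ j
        · simp only [hP, if_pos hc1]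
          by_cases hc2 : i.val = j
          · rw [hc2]; exact hgtAJ.1.2
          · exact (hpA i.val (by omega)).2
        · simp only [hP, if_neg hc1]
          exact hccAJ.1.2
    · -- there is a free cop: walk it to the gate
      have hwlt : j + 2 < k := by omega
      set iw : Fin k := ⟨j + 2, hwlt⟩ with hiw
      -- the target g and a touching witness w
      obtain ⟨g, hgadj, hgAJm, w, hwC, hwg⟩ :
          ∃ g, (0 < j → G.Adj (p (j-1)) g) ∧ g ∈ AJ G x y p (j-1) ∧
            ∃ w ∈ Stay G (AJ G x y p j) r, Ncl G g w := by
        rcases Nat.eq_zero_or_pos j with hj0 | hjpos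
        · subst hj0
          exact ⟨r, fun h => absurd h (by omega), hr, r, stay_refl G _ r, Or.inl rfl⟩
        · obtain ⟨cc, hccC, hcc⟩ := hinv4 hjpos
          exact ⟨p j, fun _ => hinv1 hjpos, hinv2, cc, hccC, Or.inr hcc⟩
      set C := Stay G (AJ G x y p j) r with hC
      have hreach : G.Reachable (c iw) g := hconn (c iw) g
      obtain ⟨pw⟩ := hreach
      refine walk_win G C iw pw c rfl ?_ ?_ r (stay_refl G _ r)
      · -- Hsafe : after arrival at g
        intro r' hr'
        set c'' := Function.update c iw g with hc''
        by_cases hcov : ∃ l, Ncl G (c'' l) r'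
        · obtain ⟨l, hl⟩ := hcov
          exact ewin_cov G l hl
        · push_neg at hcov
          have hr'AJ : r' ∈ AJ G x y p j := stay_mem G hr hr'
          have hr'g : ¬ Ncl G g r' := by
            have hcg := hcov iw
            rwa [hc'', Function.update_self] at hcg
          have hw' : w ∈ Stay G (AJ G x y p j) r' := by
            rw [stay_rebase G hr']
            exact hwC
          obtain ⟨z, hz_adj, hz_A, hz_not, cc', hcc', hzcc'⟩ :=
            bnd G hr'AJ hr'g hw' hwg
          -- the new path function
          set p' : ℕ → V := fun t => if t = j then g else if t = j+1 then z else p t with hp'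
          have hagree : ∀ t, t < j → p t = p' t := by
            intro t ht
            simp [hp', show t ≠ j by omega, show t ≠ j + 1 by omega]
          have hp'j : p' j = g := by simp [hp']
          have hp'j1 : p' (j+1) = z := by simp [hp']
          have hAJj : AJ G x y p' j = AJ G x y p j :=
            (AJ_eq_of_agree G x y hagree).symm
          have hAJ' : AJ G x y p' (j+1) = AJ G x y p j ∩ {v | ¬ Ncl G g v} := by
            rw [AJ_succ, hAJj, hp'j]
          have hr'new : r' ∈ AJ G x y p' (j+1) := by
            rw [hAJ']; exact ⟨hr'AJ, hr'g⟩
          -- strict decrease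
          have hsub : Stay G (AJ G x y p' (j+1)) r' ⊆ C := by
            rw [hAJ', hC, ← stay_rebase G hr']
            exact stay_mono G Set.inter_subset_left r'
          have hwnot : w ∉ Stay G (AJ G x y p' (j+1)) r' := by
            intro hmem
            rw [hAJ'] at hmem hr'new
            exact (stay_mem G hr'new hmem).2 hwg
          have hlt : (Stay G (AJ G x y p' (j+1)) r').ncard < C.ncard := by
            refine Set.ncard_lt_ncard ?_ (Set.toFinite _)
            rw [Set.ssubset_iff_of_subset hsub]
            exact ⟨w, hwC, hwnot⟩
          -- apply IH at level j+1
          refine IH (j+1) p' r' c'' (by omega) (by omega) ?_ ?_ ?_ ?_ ?_ ?_ hr'new ?_ ?_ ?_ ?_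
          · rw [hc'', Function.update_of_ne (by simp [hiw, Fin.ext_iff]), h0]
          · rw [hc'', Function.update_of_ne (by simp [hiw, Fin.ext_iff]), h1]
          · intro t ht
            by_cases htj : t = j
            · subst htj
              have hfe : (⟨t+2, by omega⟩ : Fin k) = iw := by simp [hiw]
              rw [hfe, hc'', Function.update_self, hp'j]
            · have ht' : t < j := by omega
              have hne : (⟨t+2, by omega⟩ : Fin k) ≠ iw := by
                simp only [hiw, Fin.ext_iff, ne_eq]
                omega
              rw [hc'', Function.update_of_ne hne, hpark t ht', hagree t ht']
          · intro t ht
            by_cases htj : t = j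
            · subst htj; rw [hp'j]; exact hgAJm.1
            · have ht' : t < j := by omega
              rw [← hagree t ht']
              exact hpA t ht'
          · intro t ht
            by_cases htj : t + 1 = j
            · have hj1 : t = j - 1 := by omega
              rw [show p' (t+1) = g by rw [htj, hp'j], ← hagree t (by omega), hj1]
              exact hgadj (by omega)
            · have ht' : t + 1 < j := by omega
              rw [← hagree t (by omega), ← hagree (t+1) ht']
              exact hchain t ht'
          · intro t s hts hs
            by_cases hsj : s = j
            · rw [hsj, hp'j, ← hagree t (by omega)]
              exact hgAJm.2 t (by omega)
            · have hs' : s < j := by omega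
              rw [← hagree t (by omega), ← hagree s hs']
              exact hsep t s hts hs'
          · intro _
            rw [Nat.add_sub_cancel, hp'j, hp'j1]
            exact hz_adj
          · rw [Nat.add_sub_cancel, hp'j1, hAJj]
            exact hz_A
          · intro _
            rw [hp'j1, hAJ']
            exact hz_not
          · intro _
            refine ⟨cc', ?_, by rw [hp'j1]; exact hzcc'⟩
            rw [hAJ']
            exact hcc'
      · -- Hstep : confinement during the walk
        intro r' hr' w' hw'
        by_cases hwA : w' ∈ AJ G x y p j
        · left
          rcases hw' with h | h
          · subst h; exact hr'
          · exact stay_tail G hr hr' h hwA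
        · right
          by_cases hx1 : Ncl G x w'
          · exact ⟨⟨0, by omega⟩, by simp [hiw, Fin.ext_iff], by rw [h0]; exact hx1⟩
          · by_cases hy1 : Ncl G y w'
            · exact ⟨⟨1, by omega⟩, by simp [hiw, Fin.ext_iff], by rw [h1]; exact hy1⟩
            · have hA0 : w' ∈ A0 G x y := ⟨hx1, hy1⟩
              have hnall : ¬ ∀ t, t < j → ¬ Ncl G (p t) w' := by
                intro hall
                exact hwA ⟨hA0, hall⟩
              push_neg at hnall
              obtain ⟨t, ht, hNcl⟩ := hnall
              refine ⟨⟨t+2, by omega⟩, ?_, ?_⟩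
              · simp only [hiw, Fin.ext_iff, ne_eq]
                omega
              · rw [hpark t ht]; exact hNcl

end CRGame
-- Part 5: initialization and conclusion
namespace CRGame

variable {V : Type*} [Fintype V] {k : ℕ} (G : SimpleGraph V)

lemma copwin_of_free (hk : 3 ≤ k) (hconn : G.Connected)
    (hfree : IsEmpty ((SimpleGraph.pathGraph 2 ⊕g SimpleGraph.pathGraph k) ↪g G)) :
    CopWinWith G k := by
  classical
  have hkpos : 0 < k := by omega
  by_cases hE : ∃ x y : V, G.Adj x y
  · obtain ⟨x, y, hxy⟩ := hE
    apply ewin_copWinWith G (fun _ => x)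
    intro r₀
    set c1 := Function.update (fun _ : Fin k => x) (⟨1, by omega⟩ : Fin k) y with hc1
    refine ewin_step G c1 ?_ (Or.inr ?_)
    · intro l
      by_cases hl : l = ⟨1, by omega⟩
      · subst hl; right; rw [hc1, Function.update_self]; exact hxy
      · left; rw [hc1, Function.update_of_ne hl]
    · intro r' hr'
      by_cases hcov : ∃ l, Ncl G (c1 l) r'
      · obtain ⟨l, hl⟩ := hcov
        exact ewin_cov G l hl
      · push_neg at hcov
        have h0 : c1 ⟨0, by omega⟩ = x := by
          rw [hc1, Function.update_of_ne (by simp [Fin.ext_iff])]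
        have h1 : c1 ⟨1, by omega⟩ = y := by rw [hc1, Function.update_self]
        have hrA : r' ∈ AJ G x y (fun _ => r') 0 := by
          refine ⟨⟨?_, ?_⟩, fun t ht => absurd ht (by omega)⟩
          · have hc := hcov ⟨0, by omega⟩; rwa [h0] at hc
          · have hc := hcov ⟨1, by omega⟩; rwa [h1] at hc
        exact main_ind G hk hconn hfree x y hxy
          ((Stay G (AJ G x y (fun _ => r') 0) r').ncard) 0 (fun _ => r') r' c1
          (by omega) le_rfl h0 h1 (fun t ht => absurd ht (by omega))
          (fun t ht => absurd ht (by omega)) (fun t ht => absurd ht (by omega))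
          (fun t s hts hs => absurd hs (by omega)) hrA
          (fun h => absurd h (by omega)) hrA (fun h => absurd h (by omega))
          (fun h => absurd h (by omega))
  · -- no edge: `V` is a single vertex
    have hsub : ∀ u v : V, u = v := by
      intro u v
      obtain ⟨w⟩ := hconn u v
      cases w with
      | nil => rfl
      | cons h _ => exact absurd ⟨_, _, h⟩ hE
    have hne : Nonempty V := hconn.nonempty
    refine ⟨fun _ => Classical.arbitrary V, fun c _ => c, fun c r i => Or.inl rfl, ?_⟩
    intro r₀ rob hrob
    exact ⟨0, Or.inl ⟨⟨0, hkpos⟩, hsub _ _⟩⟩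

end CRGame


theorem cop_number_of_P2_Pk_free {V : Type*} [Fintype V] (G : SimpleGraph V) (k : ℕ)
    (hk : 3 ≤ k) (hconn : G.Connected)
    (hfree : IsEmpty ((pathGraph 2 ⊕g pathGraph k) ↪g G)) :
    copNumber G ≤ k := by
  exact Nat.sInf_le (CRGame.copwin_of_free G hk hconn hfree)
end

section
/- A 2P_2-free graph with diameter 3 has cop number at most 2. -/
open SimpleGraph

section Aux

variable {V : Type*} {G : SimpleGraph V}

/-- From a 2K₂-free hypothesis, two disjoint edges with no cross edges are impossible. -/
lemma no2K2 (h2P2 : IsEmpty ((pathGraph 2 ⊕g pathGraph 2) ↪g G))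
    {u v w z : V} (huv : G.Adj u v) (hwz : G.Adj w z)
    (h1 : ¬G.Adj u w) (h2 : ¬G.Adj u z) (h3 : ¬G.Adj v w) (h4 : ¬G.Adj v z)
    (n1 : u ≠ w) (n2 : u ≠ z) (n3 : v ≠ w) (n4 : v ≠ z) : False := by
  have huv' : u ≠ v := huv.ne
  have hwz' : w ≠ z := hwz.ne
  apply h2P2.false
  refine ⟨⟨Sum.elim ![u, v] ![w, z], ?_⟩, ?_⟩
  · rintro (i | i) (j | j) hij <;> fin_cases i <;> fin_cases j <;> simp_all [huv.ne, hwz.ne]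
  · show ∀ {a b}, G.Adj (Sum.elim ![u, v] ![w, z] a) (Sum.elim ![u, v] ![w, z] b) ↔ _
    rintro (i | i) (j | j) <;> fin_cases i <;> fin_cases j <;>
      constructor <;> intro h <;> simp_all [SimpleGraph.sum_adj, pathGraph_adj, G.adj_comm]

open Classical in
/-- One step from `u` along a shortest path towards `r`. -/
noncomputable def stepTo (G : SimpleGraph V) (u r : V) : V :=
  if h : ∃ v', G.Adj u v' ∧ G.dist v' r < G.dist u r then h.choose else u

open Classical in
lemma stepTo_valid (u r : V) : stepTo G u r = u ∨ G.Adj u (stepTo G u r) := by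
  unfold stepTo
  split
  · next h => exact Or.inr h.choose_spec.1
  · exact Or.inl rfl

lemma stepTo_lt (hconn : G.Connected) {u r : V} (hur : u ≠ r) :
    G.dist (stepTo G u r) r < G.dist u r := by
  obtain ⟨pw, hpw⟩ := hconn.exists_walk_length_eq_dist u r
  have hex : ∃ v', G.Adj u v' ∧ G.dist v' r < G.dist u r := by
    cases pw with
    | nil => exact absurd rfl hur
    | cons hadj q =>
        refine ⟨_, hadj, lt_of_le_of_lt (dist_le q) ?_⟩
        rw [← hpw, Walk.length_cons]
        omega
  classical
  rw [stepTo]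
  rw [dif_pos hex]
  exact hex.choose_spec.2

end Aux

theorem cop_number_of_twoP2_free_diam_three {V : Type*} [Fintype V] (G : SimpleGraph V)
    (hconn : G.Connected)
    (h2P2 : IsEmpty ((pathGraph 2 ⊕g pathGraph 2) ↪g G))
    (hdiam : G.diam = 3) :
    copNumber G ≤ 2 := by
  classical
  have hne : Nonempty V := hconn.nonempty
  obtain ⟨x, y, hxy⟩ : ∃ u v, G.dist u v = 3 := by
    obtain ⟨u, v, h⟩ := G.exists_dist_eq_diam
    exact ⟨u, v, by rw [h, hdiam]⟩
  have hxny : x ≠ y := by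
    intro h; rw [h, SimpleGraph.dist_self] at hxy; omega
  have hnadjxy : ¬ G.Adj x y := by
    intro h
    rw [← SimpleGraph.dist_eq_one_iff_adj] at h
    omega
  have hmid : ∀ u, G.Adj x u → ¬ G.Adj u y := by
    intro u h1 h2
    have t := hconn.dist_triangle (u := x) (v := u) (w := y)
    rw [SimpleGraph.dist_eq_one_iff_adj.mpr h1, SimpleGraph.dist_eq_one_iff_adj.mpr h2] at t
    omega
  obtain ⟨a₀, ha₀⟩ : ∃ c, G.Adj x c := by
    obtain ⟨pw, hpw⟩ := hconn.exists_walk_length_eq_dist x y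
    cases pw with
    | nil => exact absurd rfl hxny
    | cons hadj q => exact ⟨_, hadj⟩
  obtain ⟨b, hby⟩ : ∃ c, G.Adj y c := by
    obtain ⟨pw, hpw⟩ := hconn.exists_walk_length_eq_dist y x
    cases pw with
    | nil => exact absurd rfl hxny.symm
    | cons hadj q => exact ⟨_, hadj⟩
  -- b is adjacent to every neighbor of x
  have hM : ∀ c, G.Adj x c → G.Adj b c := by
    intro c hxc
    by_contra hbc
    have hbx : ¬ G.Adj b x := fun h => hmid b h.symm hby.symm
    have hyc : ¬ G.Adj y c := fun h => hmid c hxc h.symm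
    have hbnx : b ≠ x := by rintro rfl; exact hnadjxy hby.symm
    have hbnc : b ≠ c := by rintro rfl; exact hmid b hxc hby.symm
    have hync : y ≠ c := by rintro rfl; exact hnadjxy hxc
    exact no2K2 h2P2 hby.symm hxc hbx hbc (fun h => hnadjxy h.symm) hyc hbnx hbnc
      (fun h => hxny h.symm) hync
  have hL1ne : (G.neighborFinset x).Nonempty := ⟨a₀, by rwa [SimpleGraph.mem_neighborFinset]⟩
  set cN : V → Finset V := fun v => insert v (G.neighborFinset v) with hcN
  obtain ⟨a, haL1', hamax⟩ :=
    Finset.exists_max_image (G.neighborFinset x) (fun v => (cN v ∪ cN b).card) hL1ne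
  have haL1 : G.Adj x a := by rwa [SimpleGraph.mem_neighborFinset] at haL1'
  have hmemcN : ∀ u v : V, u ∈ cN v ↔ (u = v ∨ G.Adj v u) := by
    intro u v
    simp [hcN, SimpleGraph.mem_neighborFinset]
  -- the pinning lemma: every neighbor of a vertex outside N[a] ∪ N[b] lies in N[a]
  have hpin : ∀ s, s ∉ cN a → s ∉ cN b → ∀ w, G.Adj s w → w ∈ cN a := by
    intro s hsa hsb w hsw
    by_contra hwa
    rw [hmemcN] at hsa hsb hwa
    push_neg at hsa hsb hwa
    obtain ⟨hsna, hans⟩ := hsa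
    obtain ⟨hsnb, hbns⟩ := hsb
    obtain ⟨hwna, hanw⟩ := hwa
    have hxs : ¬ G.Adj x s := fun h => hbns (hM s h)
    have hsnx : s ≠ x := by rintro rfl; exact hans haL1.symm
    have hxw : G.Adj x w := by
      by_contra hxw
      have hwnx : w ≠ x := by rintro rfl; exact hxs hsw.symm
      exact no2K2 h2P2 hsw haL1 (fun h => hxs h.symm) (fun h => hans h.symm)
        (fun h => hxw h.symm) (fun h => hanw h.symm) hsnx hsna hwnx hwna
    have hfle : (cN w ∪ cN b).card ≤ (cN a ∪ cN b).card :=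
      hamax w (by rwa [SimpleGraph.mem_neighborFinset])
    have hsubnot : ¬ (cN a ⊆ cN w ∪ cN b) := by
      intro hsub
      have hss : cN a ∪ cN b ⊂ cN w ∪ cN b := by
        constructor
        · exact Finset.union_subset hsub Finset.subset_union_right
        · intro hsup
          have hsmem : s ∈ cN w := by rw [hmemcN]; exact Or.inr hsw.symm
          have hmem2 := hsup (Finset.mem_union_left _ hsmem)
          rw [Finset.mem_union, hmemcN, hmemcN] at hmem2
          rcases hmem2 with (h | h) | (h | h)
          · exact hsna h
          · exact hans h
          · exact hsnb h
          · exact hbns h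
      exact absurd (Finset.card_lt_card hss) (not_lt.2 hfle)
    obtain ⟨l, hla, hlnot⟩ := Finset.not_subset.1 hsubnot
    rw [Finset.mem_union, hmemcN, hmemcN] at hlnot
    push_neg at hlnot
    obtain ⟨⟨hlnw, hwnl⟩, ⟨hlnb, hbnl⟩⟩ := hlnot
    rw [hmemcN] at hla
    have hal : G.Adj a l := by
      rcases hla with rfl | h
      · exact absurd (hM l haL1) hbnl
      · exact h
    have hlns : l ≠ s := by rintro rfl; exact hans hal
    have hls : G.Adj l s := by
      by_contra hls
      exact no2K2 h2P2 hal hsw hans hanw hls (fun h => hwnl h.symm)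
        hsna.symm hwna.symm hlns hlnw
    have hly : ¬ G.Adj l y := by
      intro h
      have hlx : ¬ G.Adj l x := fun h' => hbnl (hM l h'.symm)
      have hlnx : l ≠ x := by rintro rfl; exact hnadjxy h
      have hynw : y ≠ w := by rintro rfl; exact hnadjxy hxw
      exact no2K2 h2P2 h hxw hlx (fun h' => hwnl h'.symm)
        (fun h' => hnadjxy h'.symm) (fun h' => hmid w hxw h'.symm) hlnx hlnw
        hxny.symm hynw
    have hsy : ¬ G.Adj s y := by
      intro h
      have hyna : y ≠ a := by rintro rfl; exact hnadjxy haL1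
      exact no2K2 h2P2 h haL1 (fun h' => hxs h'.symm) (fun h' => hans h'.symm)
        (fun h' => hnadjxy h'.symm) (fun h' => hmid a haL1 h'.symm) hsnx hsna
        hxny.symm hyna
    have hlny : l ≠ y := by rintro rfl; exact hmid a haL1 hal
    have hsny : s ≠ y := by rintro rfl; exact hbns hby.symm
    exact no2K2 h2P2 hls hby.symm (fun h => hbnl h.symm) hly
      (fun h => hbns h.symm) hsy hlnb hlny hsnb hsny
  -- the cop strategy
  set F : (Fin 2 → V) → V → (Fin 2 → V) := fun c r =>
      if G.Adj (c 0) r then ![r, c 1]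
      else if G.Adj (c 1) r then ![c 0, r]
      else ![c 0, stepTo G (c 1) r] with hFdef
  have hF1 : ∀ c r, G.Adj (c 0) r → F c r 0 = r := by
    intro c r h; simp [hFdef, h]
  have hF2 : ∀ c r, ¬ G.Adj (c 0) r → G.Adj (c 1) r → F c r 1 = r := by
    intro c r h1 h2; simp [hFdef, h1, h2]
  have hFcomp : ∀ c r, ¬ G.Adj (c 0) r → ¬ G.Adj (c 1) r →
      F c r = ![c 0, stepTo G (c 1) r] := by
    intro c r h1 h2; simp [hFdef, h1, h2]
  apply Nat.sInf_le
  show CopWinWith G 2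
  refine ⟨![a, b], F, ?_, ?_⟩
  · intro c r i
    rw [hFdef]
    dsimp only
    split_ifs with h1 h2
    · fin_cases i
      · exact Or.inr (by simpa using h1)
      · exact Or.inl (by simp)
    · fin_cases i
      · exact Or.inl (by simp)
      · exact Or.inr (by simpa using h2)
    · fin_cases i
      · exact Or.inl (by simp)
      · rcases stepTo_valid (G := G) (c 1) r with h | h
        · exact Or.inl (by simpa using h)
        · exact Or.inr (by simpa using h)
  · intro r₀ rob hrob
    by_contra hcap
    push_neg at hcap
    set S := copsRobberSeq ![a, b] F rob r₀ with hS
    have hseq0 : S 0 = (![a, b], r₀) := rfl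
    have hseqsucc : ∀ t, S (t + 1) =
        (F (S t).1 (S t).2, rob (F (S t).1 (S t).2) (S t).2) := fun t => rfl
    have hnadj : ∀ t, ¬ G.Adj ((S t).1 0) ((S t).2) ∧ ¬ G.Adj ((S t).1 1) ((S t).2) := by
      intro t
      have hcap2 := (hcap t).2
      constructor
      · intro h
        exact hcap2 0 (by rw [hseqsucc t]; exact hF1 _ _ h)
      · intro h
        by_cases h0 : G.Adj ((S t).1 0) ((S t).2)
        · exact hcap2 0 (by rw [hseqsucc t]; exact hF1 _ _ h0)
        · exact hcap2 1 (by rw [hseqsucc t]; exact hF2 _ _ h0 h)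
    have ha0 : ¬ G.Adj a r₀ := by
      have h := (hnadj 0).1
      rw [hseq0] at h
      simpa using h
    have hb0 : ¬ G.Adj b r₀ := by
      have h := (hnadj 0).2
      rw [hseq0] at h
      simpa using h
    have ha0ne : a ≠ r₀ := by
      have h := (hcap 0).1 0
      rw [hseq0] at h
      simpa using h
    have hb0ne : b ≠ r₀ := by
      have h := (hcap 0).1 1
      rw [hseq0] at h
      simpa using h
    have hout_a : r₀ ∉ cN a := by
      rw [hmemcN]
      push_neg
      exact ⟨fun h => ha0ne h.symm, ha0⟩
    have hout_b : r₀ ∉ cN b := by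
      rw [hmemcN]
      push_neg
      exact ⟨fun h => hb0ne h.symm, hb0⟩
    have key : ∀ t, (S t).2 = r₀ ∧ (S t).1 0 = a ∧
        G.dist ((S t).1 1) r₀ + t ≤ G.dist b r₀ := by
      intro t
      induction t with
      | zero =>
          refine ⟨rfl, by rw [hseq0]; simp, by rw [hseq0]; simp⟩
      | succ t ih =>
          obtain ⟨hr, h0, hd⟩ := ih
          have hna : ¬ G.Adj ((S t).1 0) ((S t).2) := (hnadj t).1
          have hnb : ¬ G.Adj ((S t).1 1) ((S t).2) := (hnadj t).2
          have hFc : F (S t).1 (S t).2 = ![(S t).1 0, stepTo G ((S t).1 1) (S t).2] :=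
            hFcomp _ _ hna hnb
          have hc0 : (S (t+1)).1 0 = a := by
            rw [hseqsucc t, hFc]
            simpa using h0
          have hc1 : (S (t+1)).1 1 = stepTo G ((S t).1 1) ((S t).2) := by
            rw [hseqsucc t, hFc]
            simp
          have hne1 : (S t).1 1 ≠ (S t).2 := (hcap t).1 1
          have hdlt : G.dist ((S (t+1)).1 1) r₀ + (t+1) ≤ G.dist b r₀ := by
            have hlt := stepTo_lt (G := G) hconn hne1
            rw [hr] at hlt
            rw [hc1, hr]
            omega
          refine ⟨?_, hc0, hdlt⟩
          rcases hrob (F (S t).1 (S t).2) (S t).2 with h | h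
          · rw [hseqsucc t]
            dsimp only
            rw [h, hr]
          · exfalso
            set rr := rob (F (S t).1 (S t).2) (S t).2 with hrr
            rw [hr] at h
            have hr'cn := hpin r₀ hout_a hout_b _ h
            rw [hmemcN] at hr'cn
            have hr'2 : (S (t+1)).2 = rr := by rw [hseqsucc t]
            have hr'na : rr ≠ a := by
              intro he
              exact (hcap (t+1)).1 0 (by rw [hr'2, he, hc0])
            have hadj_ar' : G.Adj a rr := hr'cn.resolve_left hr'na
            have hcatch : (S (t+1+1)).1 0 = (S (t+1)).2 := by
              rw [hseqsucc (t+1)]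
              apply hF1
              rw [hc0, hr'2]
              exact hadj_ar'
            exact (hcap (t+1)).2 0 hcatch
    obtain ⟨hr, h0, hd⟩ := key (G.dist b r₀ + 1)
    omega
end

section
/- Let G be a connected 2P_2-free graph of diameter 2, let u_0 and v_0 be adjacent vertices, and let z_0 be a vertex adjacent to neither u_0 nor v_0. If additionally G contains no induced complement-of-P_5 and z_0 has a neighbor w_0 that is adjacent to both u_0 and v_0, then every neighbor u' of z_0 that is adjacent to u_0 but not v_0 is adjacent to w_0. -/
open SimpleGraph

theorem private_neighbor_adj_common_neighbor {V : Type*} [Fintype V] (G : SimpleGraph V)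
    (hconn : G.Connected)
    (h2P2 : IsEmpty ((pathGraph 2 ⊕g pathGraph 2) ↪g G))
    (hhouse : IsEmpty ((pathGraph 5)ᶜ ↪g G))
    (hdiam : G.diam = 2)
    (u₀ v₀ z₀ w₀ u' : V)
    (huv : G.Adj u₀ v₀)
    (hz₀u : ¬ G.Adj z₀ u₀) (hz₀v : ¬ G.Adj z₀ v₀)
    (hw₀z : G.Adj z₀ w₀) (hw₀u : G.Adj w₀ u₀) (hw₀v : G.Adj w₀ v₀)
    (hu'z : G.Adj z₀ u') (hu'u : G.Adj u' u₀) (hu'v : ¬ G.Adj u' v₀) :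
    G.Adj u' w₀ := by
  by_contra hne
  have h1 : u₀ ≠ v₀ := huv.ne
  have h2 : z₀ ≠ u₀ := fun h => hz₀v (h ▸ huv)
  have h3 : z₀ ≠ v₀ := fun h => hz₀u (h ▸ huv.symm)
  have h4 : z₀ ≠ w₀ := hw₀z.ne
  have h5 : u' ≠ u₀ := hu'u.ne
  have h6 : u' ≠ v₀ := fun h => hz₀v (h ▸ hu'z)
  have h7 : u' ≠ w₀ := fun h => hu'v (h ▸ hw₀v)
  have h8 : u' ≠ z₀ := hu'z.ne'
  have h9 : w₀ ≠ u₀ := hw₀u.ne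
  have h10 : w₀ ≠ v₀ := hw₀v.ne
  apply hhouse.false
  refine ⟨⟨![u₀, z₀, v₀, u', w₀], ?_⟩, ?_⟩
  · intro a b hab
    fin_cases a <;> fin_cases b <;>
      simp_all [h1, h1.symm, h2, h2.symm, h3, h3.symm, h4, h4.symm, h5, h5.symm,
        h6, h6.symm, h7, h7.symm, h8, h8.symm, h9, h9.symm, h10, h10.symm]
  · intro a b
    have hne' : ¬ G.Adj w₀ u' := fun h => hne h.symm
    have ha : ¬ G.Adj u₀ z₀ := fun h => hz₀u h.symm
    have hb : ¬ G.Adj v₀ z₀ := fun h => hz₀v h.symm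
    have hc : ¬ G.Adj v₀ u' := fun h => hu'v h.symm
    fin_cases a <;> fin_cases b <;>
      simp [compl_adj, pathGraph_adj, huv, huv.symm, hz₀u, hz₀v, hw₀z, hw₀z.symm, hw₀u, hw₀u.symm,
        hw₀v, hw₀v.symm, hu'z, hu'z.symm, hu'u, hu'u.symm, hu'v, hne, hne',
        ha, hb, hc, h1, h2, h3, h4, h5, h6, h7, h8, h9, h10,
        G.irrefl, DFunLike.coe] <;> decide
end

section
/- For every integer k ≥ 3, the class of connected graphs with no induced path on k vertices is cop-bounded: there is a constant M (namely M = k − 2) such that every connected P_k-free graph G satisfies c(G) ≤ M. -/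
open SimpleGraph

open SimpleGraph

namespace CopsProofAux

variable {V : Type} (G : SimpleGraph V)

/-- Legality of a cop move. -/
def CopLegal {n : ℕ} (c c' : Fin n → V) : Prop :=
  ∀ i, c' i = c i ∨ G.Adj (c i) (c' i)

/-- Legality of a robber move. -/
def RobLegal (r r' : V) : Prop := r' = r ∨ G.Adj r r'

/-- States from which the cops can capture within `m` rounds. -/
def win (n : ℕ) : ℕ → Set ((Fin n → V) × V)
  | 0 => {s | ∃ i, s.1 i = s.2}
  | m + 1 => win n m ∪
      {s | ∃ c', CopLegal G s.1 c' ∧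
        ((∃ i, c' i = s.2) ∨ ∀ r', RobLegal G s.2 r' → (c', r') ∈ win n m)}

lemma win_succ_mono {n m : ℕ} : win G n m ⊆ win G n (m + 1) := fun _ h => Or.inl h

lemma win_mono {n : ℕ} {m m' : ℕ} (h : m ≤ m') : win G n m ⊆ win G n m' := by
  induction h with
  | refl => exact fun _ h => h
  | step _ ih => exact fun s hs => win_succ_mono G (by exact ih hs)

lemma copLegal_refl {n : ℕ} (c : Fin n → V) : CopLegal G c c := fun _ => Or.inl rfl

lemma win_step {n : ℕ} {s : (Fin n → V) × V} :
    ∀ m, s ∈ win G n (m + 1) → s ∉ win G n 0 →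
    ∃ c', CopLegal G s.1 c' ∧
      ((∃ i, c' i = s.2) ∨ ∀ r', RobLegal G s.2 r' → (c', r') ∈ win G n m) := by
  intro m
  induction m with
  | zero =>
    intro h h0
    rcases h with h | h
    · exact absurd h h0
    · exact h
  | succ m ih =>
    intro h h0
    rcases h with h | h
    · rcases ih h h0 with ⟨c', hc', hcap⟩
      refine ⟨c', hc', ?_⟩
      rcases hcap with hcap | hcap
      · exact Or.inl hcap
      · exact Or.inr fun r' hr' => win_succ_mono G (hcap r' hr')
    · exact h

/-- Specification of a good positional cop move. -/
def MoveSpec {n : ℕ} (c : Fin n → V) (r : V) (c' : Fin n → V) : Prop :=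
  CopLegal G c c' ∧ ∀ m, (c, r) ∈ win G n (m + 1) → (c, r) ∉ win G n m →
    ((∃ i, c' i = r) ∨ ∀ r', RobLegal G r r' → (c', r') ∈ win G n m)

lemma moveSpec_exists {n : ℕ} (c : Fin n → V) (r : V) : ∃ c', MoveSpec G c r c' := by
  classical
  by_cases hW : ∃ m, (c, r) ∈ win G n m
  · set m₀ := Nat.find hW with hm₀
    have hmem : (c, r) ∈ win G n m₀ := Nat.find_spec hW
    rcases Nat.eq_zero_or_pos m₀ with h0 | hpos
    · -- already captured; staying put works, since capture impossible to "not" hold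
      refine ⟨c, copLegal_refl G c, ?_⟩
      intro m _ _
      rw [h0] at hmem
      exact Or.inl hmem
    · obtain ⟨m₁, hm₁⟩ : ∃ m₁, m₀ = m₁ + 1 := ⟨m₀ - 1, by omega⟩
      rw [hm₁] at hmem
      have hnot0 : (c, r) ∉ win G n 0 := by
        intro hc
        exact absurd (win_mono G (Nat.zero_le (m₀ - 1)) hc)
          (Nat.find_min hW (by omega))
      rcases win_step G m₁ hmem hnot0 with ⟨c', hleg, hcap⟩
      refine ⟨c', hleg, ?_⟩
      intro m hm hmnot
      have hm₀le : m₁ + 1 ≤ m + 1 := by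
        by_contra hlt
        exact Nat.find_min hW (show m + 1 < m₀ by omega) hm
      rcases hcap with hcap | hcap
      · exact Or.inl hcap
      · exact Or.inr fun r' hr' => win_mono G (by omega) (hcap r' hr')
  · refine ⟨c, copLegal_refl G c, ?_⟩
    intro m hm _
    exact absurd ⟨m + 1, hm⟩ hW

/-- A positional cop strategy extracted from the winning sets. -/
noncomputable def copF {n : ℕ} (c : Fin n → V) (r : V) : Fin n → V :=
  (moveSpec_exists G c r).choose

lemma copF_spec {n : ℕ} (c : Fin n → V) (r : V) : MoveSpec G c r (copF G c r) :=
  (moveSpec_exists G c r).choose_spec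

lemma capture_of_win {n : ℕ} (init : Fin n → V)
    (hinit : ∀ r₀ : V, ∃ m, ((init, r₀) : (Fin n → V) × V) ∈ win G n m) :
    CopWinWith G n := by
  classical
  refine ⟨init, copF G, fun c r i => (copF_spec G c r).1 i, ?_⟩
  intro r₀ rob hrob
  obtain ⟨m, hm⟩ := hinit r₀
  -- strong induction on m
  suffices h : ∀ m, ∀ t, (copsRobberSeq init (copF G) rob r₀ t) ∈ win G n m →
      ∃ t', (∃ i, (copsRobberSeq init (copF G) rob r₀ t').1 i =
              (copsRobberSeq init (copF G) rob r₀ t').2) ∨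
            (∃ i, (copsRobberSeq init (copF G) rob r₀ (t' + 1)).1 i =
              (copsRobberSeq init (copF G) rob r₀ t').2) by
    have := h m 0 (by simpa [copsRobberSeq] using hm)
    exact this
  intro m
  induction m with
  | zero =>
    intro t ht
    exact ⟨t, Or.inl ht⟩
  | succ m ih =>
    intro t ht
    by_cases hmem : copsRobberSeq init (copF G) rob r₀ t ∈ win G n m
    · exact ih t hmem
    set s := copsRobberSeq init (copF G) rob r₀ t with hs
    have hspec := (copF_spec G s.1 s.2).2 m (by simpa using ht) (by simpa using hmem)
    rcases hspec with hcap | hnext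
    · refine ⟨t, Or.inr ?_⟩
      rcases hcap with ⟨i, hi⟩
      refine ⟨i, ?_⟩
      show (copsRobberSeq init (copF G) rob r₀ (t+1)).1 i = s.2
      simp only [copsRobberSeq]
      exact hi
    · have hrleg : RobLegal G s.2 (rob (copF G s.1 s.2) s.2) := by
        rcases hrob (copF G s.1 s.2) s.2 with h | h
        · exact Or.inl h
        · exact Or.inr h
      have hnextmem : copsRobberSeq init (copF G) rob r₀ (t+1) ∈ win G n m := by
        have := hnext _ hrleg
        simpa [copsRobberSeq] using this
      exact ih (t+1) hnextmem

end CopsProofAux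

namespace CopsProofAux

variable {V : Type} (G : SimpleGraph V)

/-- The set of vertices reachable from `r` by walks staying inside `S`. -/
def compIn (S : Set V) (r : V) : Set V :=
  {x | ∃ w : G.Walk r x, ∀ y ∈ w.support, y ∈ S}

lemma compIn_subset {S : Set V} {r : V} : compIn G S r ⊆ S := by
  rintro x ⟨w, hw⟩
  exact hw x w.end_mem_support

lemma self_mem_compIn {S : Set V} {r : V} (hr : r ∈ S) : r ∈ compIn G S r := by
  refine ⟨SimpleGraph.Walk.nil, ?_⟩
  intro y hy
  simp only [SimpleGraph.Walk.support_nil, List.mem_singleton] at hy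
  exact hy ▸ hr

lemma compIn_closure {S : Set V} {r x y : V} (hx : x ∈ compIn G S r)
    (hxy : G.Adj x y) (hy : y ∈ S) : y ∈ compIn G S r := by
  obtain ⟨w, hw⟩ := hx
  refine ⟨w.concat hxy, ?_⟩
  intro z hz
  rw [SimpleGraph.Walk.support_concat, List.mem_append] at hz
  rcases hz with hz | hz
  · exact hw z hz
  · simp only [List.mem_singleton] at hz
    exact hz ▸ hy

lemma mem_compIn_of_mem_support {S : Set V} {r x : V} {w : G.Walk r x}
    (hw : ∀ y ∈ w.support, y ∈ S) {z : V} (hz : z ∈ w.support) : z ∈ compIn G S r := by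
  classical
  exact ⟨w.takeUntil z hz, fun y hy => hw y (w.support_takeUntil_subset hz hy)⟩

lemma compIn_walkConn {S : Set V} {r x y : V} (hx : x ∈ compIn G S r)
    (hy : y ∈ compIn G S r) :
    ∃ w : G.Walk x y, ∀ z ∈ w.support, z ∈ compIn G S r := by
  obtain ⟨wx, hwx⟩ := hx
  obtain ⟨wy, hwy⟩ := hy
  refine ⟨wx.reverse.append wy, ?_⟩
  intro z hz
  rw [SimpleGraph.Walk.mem_support_append_iff] at hz
  rcases hz with hz | hz
  · rw [SimpleGraph.Walk.support_reverse, List.mem_reverse] at hz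
    exact mem_compIn_of_mem_support G hwx hz
  · exact mem_compIn_of_mem_support G hwy hz

/-- Along a walk inside `T` from a vertex of `S` to a vertex outside `S`,
there is a boundary edge. -/
lemma exists_boundary {S T : Set V} :
    ∀ {x y : V} (w : G.Walk x y), x ∈ S → y ∉ S → (∀ z ∈ w.support, z ∈ T) →
      ∃ a b, a ∈ S ∧ b ∈ T ∧ b ∉ S ∧ G.Adj a b := by
  intro x y w
  induction w with
  | nil => intro hx hy _; exact absurd hx hy
  | @cons u u' y' hadj p ih =>
    intro hx hy hT
    by_cases hu' : u' ∈ S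
    · refine ih hu' hy ?_
      intro z hz
      exact hT z (List.mem_cons_of_mem _ hz)
    · refine ⟨u, u', hx, ?_, hu', hadj⟩
      exact hT u' (List.mem_cons_of_mem _ p.start_mem_support)

/-- Choosing the next guard vertex: a neighbour of `u` in `T` that has a
neighbour in `S`. -/
lemma choose_next {S T : Set V} {u : V}
    (hST : S ⊆ T)
    (havoid : ∀ x ∈ S, x ≠ u ∧ ¬ G.Adj u x)
    (hclose : ∀ x ∈ S, ∀ y ∈ T, G.Adj x y → y ≠ u → ¬ G.Adj u y → y ∈ S)
    (hTconn : ∀ x ∈ T, ∀ y ∈ T, ∃ w : G.Walk x y, ∀ z ∈ w.support, z ∈ T)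
    {x₀ : V} (hx₀ : x₀ ∈ S) {y₀ : V} (hy₀T : y₀ ∈ T) (hy₀ : G.Adj u y₀) :
    ∃ w z, w ∈ T ∧ G.Adj u w ∧ G.Adj w z ∧ z ∈ S := by
  have hy₀S : y₀ ∉ S := fun h => (havoid y₀ h).2 hy₀
  obtain ⟨wk, hwk⟩ := hTconn x₀ (hST hx₀) y₀ hy₀T
  obtain ⟨a, b, haS, hbT, hbS, hab⟩ := exists_boundary G wk hx₀ hy₀S hwk
  have hbu : b = u ∨ G.Adj u b := by
    by_contra hcon
    push_neg at hcon
    exact hbS (hclose a haS b hbT hab hcon.1 hcon.2)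
  rcases hbu with rfl | hub
  · exact absurd hab.symm (havoid a haS).2
  · exact ⟨b, a, hbT, hub, hab.symm, haS⟩

/-- A state from which the robber evades capture forever. -/
def Evade (n : ℕ) (s : (Fin n → V) × V) : Prop := ∀ m, s ∉ win G n m

lemma evade_ne {n : ℕ} {s : (Fin n → V) × V} (hE : Evade G n s) (i : Fin n) :
    s.1 i ≠ s.2 := fun h => hE 0 ⟨i, h⟩

lemma evade_not_adj {n : ℕ} {s : (Fin n → V) × V} (hE : Evade G n s) (i : Fin n) :
    ¬ G.Adj (s.1 i) s.2 := by
  classical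
  intro hadj
  apply hE 1
  refine Or.inr ⟨Function.update s.1 i s.2, ?_, Or.inl ⟨i, Function.update_self ..⟩⟩
  intro j
  by_cases hj : j = i
  · subst hj
    right
    rw [Function.update_self]
    exact hadj
  · left
    exact Function.update_of_ne hj _ _

lemma escStep {n : ℕ} {s : (Fin n → V) × V} [Fintype V] (hE : Evade G n s)
    {c' : Fin n → V} (hleg : CopLegal G s.1 c') :
    ∃ r', RobLegal G s.2 r' ∧ Evade G n (c', r') := by
  classical
  by_contra h
  push_neg at h
  have h' : ∀ r', RobLegal G s.2 r' → ∃ m, ((c', r') : (Fin n → V) × V) ∈ win G n m := by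
    intro r' hr'
    by_contra hno
    push_neg at hno
    exact h r' hr' fun m => hno m
  set f : V → ℕ := fun r' =>
    if hex : ∃ m, ((c', r') : (Fin n → V) × V) ∈ win G n m then Nat.find hex else 0 with hf
  set M := Finset.univ.sup f with hM
  apply hE (M + 1)
  refine Or.inr ⟨c', hleg, Or.inr ?_⟩
  intro r' hr'
  have hex := h' r' hr'
  have hle : Nat.find hex ≤ M := by
    have h1 : f r' ≤ M := Finset.le_sup (Finset.mem_univ r')
    rw [hf] at h1
    simpa only [dif_pos hex] using h1
  exact win_mono G hle (Nat.find_spec hex)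

/-- The invariant data maintained by the cops: an induced path of guards
`v 1, …, v i` together with a nested chain of robber territories. -/
structure Chain (i : ℕ) (v : ℕ → V) (C : ℕ → Set V) : Prop where
  hC0 : C 0 = Set.univ
  sub : ∀ j, 1 ≤ j → j ≤ i → C j ⊆ C (j - 1)
  avoid : ∀ j, 1 ≤ j → j ≤ i → ∀ x ∈ C j, x ≠ v j ∧ ¬ G.Adj (v j) x
  close : ∀ j, 1 ≤ j → j ≤ i → ∀ x ∈ C j, ∀ y ∈ C (j - 1),
    G.Adj x y → y ≠ v j → ¬ G.Adj (v j) y → y ∈ C j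
  conn : ∀ j, j ≤ i → ∀ x ∈ C j, ∀ y ∈ C j,
    ∃ w : G.Walk x y, ∀ z ∈ w.support, z ∈ C j
  adjv : ∀ j, 2 ≤ j → j ≤ i → G.Adj (v (j - 1)) (v j)
  memv : ∀ j, 2 ≤ j → j ≤ i → v j ∈ C (j - 2)
  nbr : ∀ j, 1 ≤ j → j ≤ i → ∃ y ∈ C (j - 1), G.Adj (v j) y

variable {G}

lemma Chain.nested {i : ℕ} {v : ℕ → V} {C : ℕ → Set V} (h : Chain G i v C)
    {a b : ℕ} (hab : a ≤ b) (hbi : b ≤ i) : C b ⊆ C a := by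
  have key : ∀ d b, b ≤ i → a + d = b → C b ⊆ C a := by
    intro d
    induction d with
    | zero =>
      intro b _ hb
      have : a = b := by omega
      exact this ▸ fun _ hx => hx
    | succ d ih =>
      intro b hb hd
      have h1 : C b ⊆ C (b - 1) := h.sub b (by omega) hb
      have h2 : C (b - 1) ⊆ C a := ih (b - 1) (by omega) (by omega)
      exact fun x hx => h2 (h1 hx)
  exact key (b - a) b hbi (by omega)

lemma Chain.stay {i : ℕ} {v : ℕ → V} {C : ℕ → Set V} (h : Chain G i v C)
    {r r' : V} (hr : r ∈ C i) (hleg : RobLegal G r r')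
    (hav : ∀ j, 1 ≤ j → j ≤ i → r' ≠ v j ∧ ¬ G.Adj (v j) r') : r' ∈ C i := by
  suffices hs : ∀ j, j ≤ i → r' ∈ C j from hs i le_rfl
  intro j
  induction j with
  | zero =>
    intro _
    rw [h.hC0]
    trivial
  | succ j ih =>
    intro hji
    have hr'j : r' ∈ C j := ih (by omega)
    have hrj : r ∈ C (j + 1) := h.nested hji le_rfl hr
    rcases hleg with rfl | hadj
    · exact hrj
    · have hy : r' ∈ C ((j + 1) - 1) := by simpa using hr'j
      exact h.close (j + 1) (by omega) hji r hrj r' hy hadj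
        (hav (j + 1) (by omega) hji).1 (hav (j + 1) (by omega) hji).2

end CopsProofAux

namespace CopsProofAux

variable {V : Type} {G : SimpleGraph V}

lemma cop_walk [Fintype V] {n i : ℕ} (hin : i < n) {v : ℕ → V} {C : ℕ → Set V}
    (hch : Chain G i v C) :
    ∀ {a b : V} (_ : G.Walk a b) (s : (Fin n → V) × V), Evade G n s →
      s.1 ⟨i, hin⟩ = a →
      (∀ jf : Fin n, (jf : ℕ) + 1 ≤ i → s.1 jf = v ((jf : ℕ) + 1)) →
      s.2 ∈ C i →
      ∃ s' : (Fin n → V) × V, Evade G n s' ∧ s'.1 ⟨i, hin⟩ = b ∧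
        (∀ jf : Fin n, jf ≠ ⟨i, hin⟩ → s'.1 jf = s.1 jf) ∧ s'.2 ∈ C i := by
  intro a b w
  induction w with
  | nil =>
    intro s hE hca hg hr
    exact ⟨s, hE, hca, fun _ _ => rfl, hr⟩
  | @cons u u' w' hadj p ih =>
    intro s hE hca hg hr
    classical
    set c' : Fin n → V := Function.update s.1 ⟨i, hin⟩ u' with hc'
    have hleg : CopLegal G s.1 c' := by
      intro j
      by_cases hj : j = ⟨i, hin⟩
      · subst hj
        right
        rw [hc', Function.update_self, hca]
        exact hadj
      · left
        rw [hc']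
        exact Function.update_of_ne hj _ _
    obtain ⟨r', hrleg, hE'⟩ := escStep G hE hleg
    have hg' : ∀ jf : Fin n, (jf : ℕ) + 1 ≤ i → c' jf = v ((jf : ℕ) + 1) := by
      intro jf hjf
      have hne : jf ≠ ⟨i, hin⟩ := by
        intro hh
        rw [hh] at hjf
        simp at hjf
      rw [hc', Function.update_of_ne hne _ _]
      exact hg jf hjf
    have hr' : r' ∈ C i := by
      refine hch.stay hr hrleg ?_
      intro j hj1 hji
      have hlt : j - 1 < n := by omega
      have hcj : c' ⟨j - 1, hlt⟩ = v j := by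
        have := hg' ⟨j - 1, hlt⟩ (by simp; omega)
        simpa [Nat.sub_add_cancel hj1] using this
      constructor
      · have := evade_ne G hE' ⟨j - 1, hlt⟩
        simp only [hcj] at this
        exact fun hh => this hh.symm
      · have := evade_not_adj G hE' ⟨j - 1, hlt⟩
        simpa only [hcj] using this
    obtain ⟨s', hE'', hcb, hpres, hr''⟩ := ih (c', r') hE'
      (by rw [hc']; exact Function.update_self _ _ _) hg' hr'
    refine ⟨s', hE'', hcb, ?_, hr''⟩
    intro jf hjf
    rw [hpres jf hjf, hc']
    exact Function.update_of_ne hjf _ _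

lemma place_guard [Fintype V] {n i : ℕ} (hin : i < n) {v : ℕ → V} {C : ℕ → Set V}
    (hch : Chain G i v C) (s' : (Fin n → V) × V) (hE' : Evade G n s')
    (hg' : ∀ jf : Fin n, (jf : ℕ) + 1 ≤ i → s'.1 jf = v ((jf : ℕ) + 1))
    {v' : V} (hcop : s'.1 ⟨i, hin⟩ = v') (hr' : s'.2 ∈ C i)
    (hnbr : ∃ z ∈ C i, G.Adj v' z)
    (hprev : 1 ≤ i → G.Adj (v i) v' ∧ v' ∈ C (i - 1)) :
    ∃ v'' C'', Chain G (i + 1) v'' C'' ∧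
      (∀ jf : Fin n, (jf : ℕ) + 1 ≤ i + 1 → s'.1 jf = v'' ((jf : ℕ) + 1)) ∧
      s'.2 ∈ C'' (i + 1) := by
  classical
  set S : Set V := {x | x ∈ C i ∧ x ≠ v' ∧ ¬ G.Adj v' x} with hS
  set D := compIn G S s'.2 with hD
  set v'' : ℕ → V := fun j => if j = i + 1 then v' else v j with hv''
  set C'' : ℕ → Set V := fun j => if j = i + 1 then D else C j with hC''
  have hCeq : ∀ j, j ≤ i → C'' j = C j := by
    intro j hj
    rw [hC'']
    simp only [if_neg (by omega : ¬ j = i + 1)]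
  have hveq : ∀ j, j ≤ i → v'' j = v j := by
    intro j hj
    rw [hv'']
    simp only [if_neg (by omega : ¬ j = i + 1)]
  have hCtop : C'' (i + 1) = D := by rw [hC'']; simp
  have hvtop : v'' (i + 1) = v' := by rw [hv'']; simp
  have hrne : s'.2 ≠ v' := by
    have := evade_ne G hE' ⟨i, hin⟩
    rw [hcop] at this
    exact fun hh => this hh.symm
  have hrnadj : ¬ G.Adj v' s'.2 := by
    have := evade_not_adj G hE' ⟨i, hin⟩
    rwa [hcop] at this
  have hrS : s'.2 ∈ S := ⟨hr', hrne, hrnadj⟩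
  have hrD : s'.2 ∈ D := self_mem_compIn G hrS
  have hDS : D ⊆ S := compIn_subset G
  refine ⟨v'', C'', ?_, ?_, ?_⟩
  · constructor
    · rw [hCeq 0 (by omega)]
      exact hch.hC0
    · -- sub
      intro j h1 h2
      by_cases hj : j = i + 1
      · subst hj
        rw [hCtop]
        rw [hCeq (i + 1 - 1) (by omega)]
        have : (i + 1) - 1 = i := by omega
        rw [this]
        exact fun x hx => (hDS hx).1
      · rw [hCeq j (by omega), hCeq (j - 1) (by omega)]
        exact hch.sub j h1 (by omega)
    · -- avoid
      intro j h1 h2 x hx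
      by_cases hj : j = i + 1
      · subst hj
        rw [hCtop] at hx
        rw [hvtop]
        exact ⟨(hDS hx).2.1, (hDS hx).2.2⟩
      · rw [hCeq j (by omega)] at hx
        rw [hveq j (by omega)]
        exact hch.avoid j h1 (by omega) x hx
    · -- close
      intro j h1 h2 x hx y hy hxy hy1 hy2
      by_cases hj : j = i + 1
      · subst hj
        rw [hCtop] at hx ⊢
        rw [hvtop] at hy1 hy2
        rw [hCeq (i + 1 - 1) (by omega)] at hy
        have hii : (i + 1) - 1 = i := by omega
        rw [hii] at hy
        exact compIn_closure G hx hxy ⟨hy, hy1, hy2⟩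
      · rw [hCeq j (by omega)] at hx ⊢
        rw [hCeq (j - 1) (by omega)] at hy
        rw [hveq j (by omega)] at hy1 hy2
        exact hch.close j h1 (by omega) x hx y hy hxy hy1 hy2
    · -- conn
      intro j h2 x hx y hy
      by_cases hj : j = i + 1
      · subst hj
        rw [hCtop] at hx hy ⊢
        exact compIn_walkConn G hx hy
      · rw [hCeq j (by omega)] at hx hy ⊢
        exact hch.conn j (by omega) x hx y hy
    · -- adjv
      intro j h1 h2
      by_cases hj : j = i + 1
      · subst hj
        have h1' : 1 ≤ i := by omega
        rw [hvtop]
        rw [hveq ((i + 1) - 1) (by omega)]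
        have hii : (i + 1) - 1 = i := by omega
        rw [hii]
        exact (hprev h1').1
      · rw [hveq j (by omega), hveq (j - 1) (by omega)]
        exact hch.adjv j h1 (by omega)
    · -- memv
      intro j h1 h2
      by_cases hj : j = i + 1
      · subst hj
        have h1' : 1 ≤ i := by omega
        rw [hvtop, hCeq ((i + 1) - 2) (by omega)]
        have hii : (i + 1) - 2 = i - 1 := by omega
        rw [hii]
        exact (hprev h1').2
      · rw [hveq j (by omega), hCeq (j - 2) (by omega)]
        exact hch.memv j h1 (by omega)
    · -- nbr
      intro j h1 h2
      by_cases hj : j = i + 1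
      · subst hj
        obtain ⟨z, hz, hadjz⟩ := hnbr
        rw [hvtop, hCeq ((i + 1) - 1) (by omega)]
        have hii : (i + 1) - 1 = i := by omega
        rw [hii]
        exact ⟨z, hz, hadjz⟩
      · rw [hveq j (by omega), hCeq (j - 1) (by omega)]
        exact hch.nbr j h1 (by omega)
  · -- guards
    intro jf hjf
    by_cases hj : (jf : ℕ) + 1 = i + 1
    · have : jf = ⟨i, hin⟩ := by
        apply Fin.ext
        simp only []
        omega
      rw [this, hcop]
      show v' = v'' (i + 1)
      rw [hvtop]
    · rw [hveq ((jf : ℕ) + 1) (by omega)]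
      exact hg' jf (by omega)
  · rw [hCtop]
    exact hrD

lemma exists_adj_of_reachable {x y : V} (h : G.Reachable x y) (hne : x ≠ y) :
    ∃ z, G.Adj x z := by
  obtain ⟨w⟩ := h
  cases w with
  | nil => exact absurd rfl hne
  | cons h p => exact ⟨_, h⟩

lemma stage_step [Fintype V] (hconn : G.Connected) {n i : ℕ} (hin : i < n)
    {v : ℕ → V} {C : ℕ → Set V} (hch : Chain G i v C)
    (s : (Fin n → V) × V) (hE : Evade G n s)
    (hg : ∀ jf : Fin n, (jf : ℕ) + 1 ≤ i → s.1 jf = v ((jf : ℕ) + 1))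
    (hr : s.2 ∈ C i) :
    ∃ (v' : ℕ → V) (C' : ℕ → Set V) (s' : (Fin n → V) × V),
      Chain G (i + 1) v' C' ∧ Evade G n s' ∧
      (∀ jf : Fin n, (jf : ℕ) + 1 ≤ i + 1 → s'.1 jf = v' ((jf : ℕ) + 1)) ∧
      s'.2 ∈ C' (i + 1) := by
  rcases Nat.eq_zero_or_pos i with rfl | hpos
  · -- i = 0 : the first guard is placed at the cop's current position
    have hne : s.1 ⟨0, hin⟩ ≠ s.2 := evade_ne G hE _
    have hnbr : ∃ z ∈ C 0, G.Adj (s.1 ⟨0, hin⟩) z := by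
      obtain ⟨z, hz⟩ := exists_adj_of_reachable (hconn.preconnected (s.1 ⟨0, hin⟩) s.2) hne
      refine ⟨z, ?_, hz⟩
      rw [hch.hC0]
      trivial
    obtain ⟨v'', C'', hch', hg', hr'⟩ :=
      place_guard hin hch s hE hg rfl hr hnbr (fun hcon => absurd hcon (by omega))
    exact ⟨v'', C'', s, hch', hE, hg', hr'⟩
  · -- i ≥ 1 : choose the next guard vertex, walk cop i there, place the guard
    obtain ⟨y₀, hy₀T, hy₀⟩ := hch.nbr i hpos le_rfl
    obtain ⟨v', z, hv'T, hadj1, hadj2, hzS⟩ :=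
      choose_next G (hch.sub i hpos le_rfl) (hch.avoid i hpos le_rfl)
        (hch.close i hpos le_rfl) (hch.conn (i - 1) (by omega)) hr hy₀T hy₀
    obtain ⟨w⟩ := hconn.preconnected (s.1 ⟨i, hin⟩) v'
    obtain ⟨s', hE', hcop, hpres, hr'⟩ := cop_walk hin hch w s hE rfl hg hr
    have hg'' : ∀ jf : Fin n, (jf : ℕ) + 1 ≤ i → s'.1 jf = v ((jf : ℕ) + 1) := by
      intro jf hjf
      have hne : jf ≠ ⟨i, hin⟩ := by
        intro hh
        rw [hh] at hjf
        simp at hjf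
      rw [hpres jf hne]
      exact hg jf hjf
    obtain ⟨v'', C'', hch', hg3, hr3⟩ := place_guard hin hch s' hE' hg'' hcop hr'
      ⟨z, hzS, hadj2⟩ (fun _ => ⟨hadj1, hv'T⟩)
    exact ⟨v'', C'', s', hch', hE', hg3, hr3⟩

end CopsProofAux

namespace CopsProofAux

variable {V : Type} {G : SimpleGraph V}

lemma build [Fintype V] (hconn : G.Connected) {n : ℕ}
    (hE0 : ∃ s : (Fin n → V) × V, Evade G n s) :
    ∀ i, i ≤ n → ∃ (v : ℕ → V) (C : ℕ → Set V) (s : (Fin n → V) × V),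
      Chain G i v C ∧ Evade G n s ∧
      (∀ jf : Fin n, (jf : ℕ) + 1 ≤ i → s.1 jf = v ((jf : ℕ) + 1)) ∧
      s.2 ∈ C i := by
  intro i
  induction i with
  | zero =>
    intro _
    obtain ⟨s, hs⟩ := hE0
    refine ⟨fun _ => s.2, fun _ => Set.univ, s, ?_, hs, ?_, trivial⟩
    · constructor
      · rfl
      · intro j h1 h2; omega
      · intro j h1 h2; omega
      · intro j h1 h2; omega
      · intro j hj x _ y _
        obtain ⟨w⟩ := hconn.preconnected x y
        exact ⟨w, fun z _ => trivial⟩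
      · intro j h1 h2; omega
      · intro j h1 h2; omega
      · intro j h1 h2; omega
    · intro jf hjf
      omega
  | succ i ih =>
    intro hsucc
    obtain ⟨v, C, s, hch, hE, hg, hr⟩ := ih (by omega)
    obtain ⟨v', C', s', hch', hE', hg', hr'⟩ :=
      stage_step hconn (by omega : i < n) hch s hE hg hr
    exact ⟨v', C', s', hch', hE', hg', hr'⟩

lemma no_evade [Fintype V] (hconn : G.Connected) {n k : ℕ} (hn1 : 1 ≤ n)
    (hkn : k = n + 2)
    (hfree : IsEmpty (pathGraph k ↪g G)) (s : (Fin n → V) × V) :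
    ¬ Evade G n s := by
  intro hE
  obtain ⟨v, C, s', hch, hE', hg, hr⟩ := build hconn ⟨s, hE⟩ n le_rfl
  obtain ⟨y₀, hy₀T, hy₀⟩ := hch.nbr n hn1 le_rfl
  obtain ⟨w, z, hwT, hadj1, hadj2, hzS⟩ :=
    choose_next G (hch.sub n hn1 le_rfl) (hch.avoid n hn1 le_rfl)
      (hch.close n hn1 le_rfl) (hch.conn (n - 1) (by omega)) hr hy₀T hy₀
  set p : ℕ → V := fun j => if j = n + 1 then w else if j = n + 2 then z else v j
    with hp
  have hpv : ∀ j, j ≤ n → p j = v j := by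
    intro j hj
    rw [hp]
    simp only [if_neg (by omega : ¬ j = n + 1), if_neg (by omega : ¬ j = n + 2)]
  have hpw : p (n + 1) = w := by rw [hp]; simp
  have hpz : p (n + 2) = z := by
    show (if n + 2 = n + 1 then w else if n + 2 = n + 2 then z else v (n + 2)) = z
    split_ifs with h1 h2
    · exact absurd h1 (by omega)
    · rfl
    · exact absurd rfl h2
  have hmem : ∀ j, 2 ≤ j → j ≤ n + 2 → p j ∈ C (j - 2) := by
    intro j h2 hj
    rcases Nat.lt_or_ge j (n + 1) with hlt | hge
    · rw [hpv j (by omega)]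
      exact hch.memv j h2 (by omega)
    · rcases Nat.eq_or_lt_of_le hge with heq | hlt2
      · subst heq
        rw [hpw, (by omega : n + 1 - 2 = n - 1)]
        exact hwT
      · have hj2 : j = n + 2 := by omega
        rw [hj2, hpz]
        have : n + 2 - 2 = n := by omega
        rw [this]
        exact hzS
  have hadj : ∀ j, 2 ≤ j → j ≤ n + 2 → G.Adj (p (j - 1)) (p j) := by
    intro j h2 hj
    rcases Nat.lt_or_ge j (n + 1) with hlt | hge
    · rw [hpv j (by omega), hpv (j - 1) (by omega)]
      exact hch.adjv j h2 (by omega)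
    · rcases Nat.eq_or_lt_of_le hge with heq | hlt2
      · subst heq
        rw [hpw, (by omega : n + 1 - 1 = n), hpv n le_rfl]
        exact hadj1
      · have hj2 : j = n + 2 := by omega
        rw [hj2, hpz]
        have : n + 2 - 1 = n + 1 := by omega
        rw [this, hpw]
        exact hadj2
  have hsep : ∀ a b, 1 ≤ a → a + 2 ≤ b → b ≤ n + 2 →
      p b ≠ p a ∧ ¬ G.Adj (p a) (p b) := by
    intro a b ha hab hb
    have hpa : p a = v a := hpv a (by omega)
    have hmb : p b ∈ C (b - 2) := hmem b (by omega) hb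
    have hsub : C (b - 2) ⊆ C a := hch.nested (by omega) (by omega)
    have h2 := hch.avoid a ha (by omega) (p b) (hsub hmb)
    rw [← hpa] at h2
    exact h2
  -- build the forbidden induced path
  apply hfree.false
  have hval : ∀ a : Fin k, (a : ℕ) + 1 ≤ n + 2 := by
    intro a
    have := a.isLt
    omega
  refine ⟨⟨fun a : Fin k => p ((a : ℕ) + 1), ?_⟩, ?_⟩
  · -- injectivity
    intro a b hab
    by_contra hne
    rcases Nat.lt_or_ge (a : ℕ) (b : ℕ) with hlt | hge
    · rcases Nat.eq_or_lt_of_le hlt with heq | hlt2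
      · -- consecutive: adjacent hence distinct
        have := hadj ((b : ℕ) + 1) (by omega) (hval b)
        have hb1 : (b : ℕ) + 1 - 1 = (a : ℕ) + 1 := by omega
        rw [hb1] at this
        exact G.ne_of_adj this hab
      · have := (hsep ((a : ℕ) + 1) ((b : ℕ) + 1) (by omega) (by omega) (hval b)).1
        exact this hab.symm
    · rcases Nat.eq_or_lt_of_le hge with heq | hlt2
      · exact hne (Fin.ext heq.symm)
      · rcases Nat.eq_or_lt_of_le hlt2 with heq2 | hlt3
        · have := hadj ((a : ℕ) + 1) (by omega) (hval a)
          have ha1 : (a : ℕ) + 1 - 1 = (b : ℕ) + 1 := by omega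
          rw [ha1] at this
          exact G.ne_of_adj this hab.symm
        · have := (hsep ((b : ℕ) + 1) ((a : ℕ) + 1) (by omega) (by omega) (hval a)).1
          exact this hab
  · -- adjacency iff
    intro a b
    show G.Adj (p ((a : ℕ) + 1)) (p ((b : ℕ) + 1)) ↔ (pathGraph k).Adj a b
    rw [SimpleGraph.pathGraph_adj]
    constructor
    · intro h
      by_contra hnp
      push_neg at hnp
      rcases lt_trichotomy (a : ℕ) (b : ℕ) with hlt | heq | hgt
      · have hne1 : (a : ℕ) + 1 ≠ (b : ℕ) := hnp.1
        have h2 : (a : ℕ) + 2 ≤ (b : ℕ) := by omega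
        exact (hsep ((a : ℕ) + 1) ((b : ℕ) + 1) (by omega) (by omega) (hval b)).2 h
      · have : a = b := Fin.ext heq
        rw [this] at h
        exact G.loopless.irrefl _ h
      · have hne1 : (b : ℕ) + 1 ≠ (a : ℕ) := hnp.2
        have h2 : (b : ℕ) + 2 ≤ (a : ℕ) := by omega
        exact (hsep ((b : ℕ) + 1) ((a : ℕ) + 1) (by omega) (by omega) (hval a)).2 h.symm
    · intro h
      rcases h with h | h
      · have := hadj ((b : ℕ) + 1) (by omega) (hval b)
        have hb1 : (b : ℕ) + 1 - 1 = (a : ℕ) + 1 := by omega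
        rw [hb1] at this
        exact this
      · have := hadj ((a : ℕ) + 1) (by omega) (hval a)
        have ha1 : (a : ℕ) + 1 - 1 = (b : ℕ) + 1 := by omega
        rw [ha1] at this
        exact this.symm

end CopsProofAux

theorem pathFree_cop_bounded (k : ℕ) (hk : 3 ≤ k) :
    ∃ M : ℕ, M = k - 2 ∧
      ∀ (V : Type) [Fintype V] (G : SimpleGraph V),
        G.Connected → IsEmpty (pathGraph k ↪g G) → copNumber G ≤ M := by
  refine ⟨k - 2, rfl, ?_⟩
  intro V _ G hconn hfree
  have hwin : CopWinWith G (k - 2) := by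
    have hne : Nonempty V := hconn.nonempty
    apply CopsProofAux.capture_of_win G (init := fun _ => Classical.arbitrary V)
    intro r₀
    by_contra h
    push_neg at h
    exact CopsProofAux.no_evade hconn (n := k - 2) (by omega) (by omega) hfree _
      (fun m => h m)
  exact Nat.sInf_le hwin
end
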